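/- Let Z_t = ∑_{i,j ∈ [n]} [ε² ∧ (x_i(t) − x_j(t))²] ∨ (ε²·𝟙{(i,j) ∉ E}). Then Z_t − Z_{t+1} ≥ 4 ∑_{i ∈ [n]} (|E_t| − |N_i(t)|)·(x_i(t) − x_i(t+1))². -/

import Mathlib

open Finset
open scoped Classical

/-- The threshold graph `G_t`: social neighbors whose garbage differs by at most `ε`. -/
def Gt {n : ℕ} (G : SimpleGraph (Fin n)) (x : ℕ → Fin n → ℝ) (ε : ℝ) (t : ℕ) :
    SimpleGraph (Fin n) where
  Adj i j := G.Adj i j ∧ |x t i - x t j| ≤ ε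
  symm := by
    constructor
    intro i j h
    exact ⟨h.1.symm, by rw [abs_sub_comm]; exact h.2⟩
  loopless := by
    constructor
    intro i h
    exact G.irrefl h.1

/-- `|E_t|`: the number of edges of `G_t`. -/
noncomputable def Ecard {n : ℕ} (G : SimpleGraph (Fin n)) (x : ℕ → Fin n → ℝ) (ε : ℝ)
    (t : ℕ) : ℕ :=
  (Gt G x ε t).edgeSet.ncard

/-- `N_i(t)`: the neighbors of `i` in `G_t`, as a finset. -/
noncomputable def Nb {n : ℕ} (G : SimpleGraph (Fin n)) (x : ℕ → Fin n → ℝ) (ε : ℝ)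
    (t : ℕ) (i : Fin n) : Finset (Fin n) :=
  Finset.univ.filter fun j => (Gt G x ε t).Adj i j

/-- The update rule of the garbage disposal game. -/
def Update {n : ℕ} (G : SimpleGraph (Fin n)) (x : ℕ → Fin n → ℝ) (ε : ℝ) : Prop :=
  ∀ t i,
    x (t + 1) i =
      (if (Gt G x ε t).edgeSet.Nonempty then (1 : ℝ) else 0) / (Ecard G x ε t : ℝ) *
          ∑ j ∈ Nb G x ε t i, x t j +
        (1 - ((Nb G x ε t i).card : ℝ) / (Ecard G x ε t : ℝ) *
            (if (Gt G x ε t).edgeSet.Nonempty then (1 : ℝ) else 0)) * x t i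

/-- The Lyapunov functional `Z_t`. -/
noncomputable def Z {n : ℕ} (G : SimpleGraph (Fin n)) (x : ℕ → Fin n → ℝ) (ε : ℝ)
    (t : ℕ) : ℝ :=
  ∑ i, ∑ j,
    max (min (ε ^ 2) ((x t i - x t j) ^ 2)) (ε ^ 2 * if ¬ G.Adj i j then 1 else 0)

/-- Lemma 3: `Z_t − Z_{t+1} ≥ 4 ∑_i (|E_t| − |N_i(t)|) (x_i(t) − x_i(t+1))²`. -/
theorem Z_decrement {n : ℕ} (G : SimpleGraph (Fin n)) (x : ℕ → Fin n → ℝ)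
    (ε : ℝ) (hε : 0 < ε) (hx0 : ∀ i, 0 ≤ x 0 i) (hupd : Update G x ε) (t : ℕ) :
    Z G x ε t - Z G x ε (t + 1) ≥
      4 * ∑ i, ((Ecard G x ε t : ℝ) - ((Nb G x ε t i).card : ℝ)) *
        (x t i - x (t + 1) i) ^ 2 := by
  classical
  set m : ℝ := (Ecard G x ε t : ℝ) with hm
  set A : Fin n → Fin n → ℝ := fun i j => if (Gt G x ε t).Adj i j then (1:ℝ) else 0 with hA
  set δ : Fin n → ℝ := fun i => x (t+1) i - x t i with hδ
  have hAsymm : ∀ i j, A i j = A j i := by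
    intro i j
    simp only [hA]
    by_cases h : (Gt G x ε t).Adj i j
    · rw [if_pos h, if_pos h.symm]
    · rw [if_neg h, if_neg (fun h' => h h'.symm)]
  have hAnn : ∀ i j, 0 ≤ A i j := by
    intro i j; simp only [hA]; split <;> norm_num
  have hsumA : ∀ i (g : Fin n → ℝ), ∑ j, A i j * g j = ∑ j ∈ Nb G x ε t i, g j := by
    intro i g
    rw [Nb, Finset.sum_filter]
    refine Finset.sum_congr rfl fun j _ => ?_
    simp only [hA]; split <;> simp
  have hd : ∀ i, ((Nb G x ε t i).card : ℝ) = ∑ j, A i j := by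
    intro i
    have := hsumA i (fun _ => (1:ℝ))
    simp only [mul_one] at this
    rw [this, Finset.sum_const, nsmul_eq_mul, mul_one]
  -- K1 : ∑_j A i j (x_j - x_i) = m δ_i
  have hK1 : ∀ i, ∑ j, A i j * (x t j - x t i) = m * δ i := by
    intro i
    have hupdi := hupd t i
    rw [← hm] at hupdi
    by_cases hne : (Gt G x ε t).edgeSet.Nonempty
    · have hmpos : (0:ℝ) < m := by
        have hfin : (Gt G x ε t).edgeSet.Finite := Set.toFinite _
        have : 0 < (Gt G x ε t).edgeSet.ncard := (Set.ncard_pos hfin).mpr hne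
        rw [hm]; exact_mod_cast this
      rw [if_pos hne] at hupdi
      have h1 : ∑ j, A i j * (x t j - x t i)
          = (∑ j ∈ Nb G x ε t i, x t j) - ((Nb G x ε t i).card : ℝ) * x t i := by
        rw [hsumA i (fun j => x t j - x t i), Finset.sum_sub_distrib, Finset.sum_const,
          nsmul_eq_mul]
      rw [h1]
      simp only [hδ]
      rw [hupdi]
      field_simp
      ring
    · have hA0 : ∀ j, A i j = 0 := by
        intro j
        simp only [hA]
        rw [if_neg]
        intro h
        exact hne ⟨s(i,j), (Gt G x ε t).mem_edgeSet.mpr h⟩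
      have hδ0 : δ i = 0 := by
        simp only [hδ]
        rw [if_neg hne] at hupdi
        rw [hupdi]; ring
      simp [hA0, hδ0]
  -- pointwise bound
  have hpt : ∀ i j,
      A i j * ((x t i - x t j)^2 - (x (t+1) i - x (t+1) j)^2) ≤
        (max (min (ε^2) ((x t i - x t j)^2)) (ε^2 * if ¬ G.Adj i j then 1 else 0)
         - max (min (ε^2) ((x (t+1) i - x (t+1) j)^2)) (ε^2 * if ¬ G.Adj i j then 1 else 0)) := by
    intro i j
    by_cases h : (Gt G x ε t).Adj i j
    · have hG : G.Adj i j := h.1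
      have hsq : (x t i - x t j)^2 ≤ ε^2 := by
        have h2 := h.2
        have := abs_nonneg (x t i - x t j)
        nlinarith [sq_abs (x t i - x t j)]
      have hind : (if ¬ G.Adj i j then (1:ℝ) else 0) = 0 := by
        rw [if_neg (not_not_intro hG)]
      rw [hind, mul_zero]
      have e1 : max (min (ε^2) ((x t i - x t j)^2)) 0 = (x t i - x t j)^2 := by
        rw [min_eq_right hsq, max_eq_left (sq_nonneg _)]
      have e2 : max (min (ε^2) ((x (t+1) i - x (t+1) j)^2)) 0
          = min (ε^2) ((x (t+1) i - x (t+1) j)^2) := by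
        rw [max_eq_left (le_min (sq_nonneg _) (sq_nonneg _))]
      rw [e1, e2]
      have e3 : min (ε^2) ((x (t+1) i - x (t+1) j)^2) ≤ (x (t+1) i - x (t+1) j)^2 :=
        min_le_right _ _
      have hA1 : A i j = 1 := by simp only [hA]; rw [if_pos h]
      rw [hA1, one_mul]
      linarith
    · have hA0 : A i j = 0 := by simp only [hA]; rw [if_neg h]
      rw [hA0, zero_mul]
      by_cases hG : G.Adj i j
      · have hfar : ¬ |x t i - x t j| ≤ ε := fun hle => h ⟨hG, hle⟩
        have hge : ε^2 ≤ (x t i - x t j)^2 := by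
          have h2 : ε ≤ |x t i - x t j| := le_of_not_ge hfar
          nlinarith [sq_abs (x t i - x t j)]
        have hind : (if ¬ G.Adj i j then (1:ℝ) else 0) = 0 := by
          rw [if_neg (not_not_intro hG)]
        rw [hind, mul_zero]
        have e1 : max (min (ε^2) ((x t i - x t j)^2)) 0 = ε^2 := by
          rw [min_eq_left hge, max_eq_left (sq_nonneg _)]
        rw [e1]
        have : max (min (ε^2) ((x (t+1) i - x (t+1) j)^2)) 0 ≤ ε^2 :=
          max_le (min_le_left _ _) (sq_nonneg _)
        linarith
      · have hind : (if ¬ G.Adj i j then (1:ℝ) else 0) = 1 := by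
          rw [if_pos hG]
        rw [hind, mul_one]
        have e1 : ∀ s : ℝ, max (min (ε^2) s) (ε^2) = ε^2 := fun s =>
          max_eq_right (min_le_left _ _)
        rw [e1, e1]
        simp
  -- named sums
  set S1 : ℝ := ∑ i, ∑ j, A i j * (δ i - δ j)^2 with hS1
  set S2 : ℝ := ∑ i, ∑ j, A i j * (x t i - x t j) * (δ i - δ j) with hS2
  set SD : ℝ := ∑ i, δ i ^ 2 with hSD
  set Sd : ℝ := ∑ i, (∑ j, A i j) * δ i ^ 2 with hSd
  set T : ℝ := ∑ i, ∑ j, A i j * ((x t i - x t j)^2 - (x (t+1) i - x (t+1) j)^2) with hT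
  -- step 1 : T ≤ Z t - Z (t+1)
  have step1 : T ≤ Z G x ε t - Z G x ε (t+1) := by
    have hZ : Z G x ε t - Z G x ε (t+1)
        = ∑ i, ∑ j, (max (min (ε^2) ((x t i - x t j)^2)) (ε^2 * if ¬ G.Adj i j then 1 else 0)
           - max (min (ε^2) ((x (t+1) i - x (t+1) j)^2)) (ε^2 * if ¬ G.Adj i j then 1 else 0)) := by
      simp only [Z, ← Finset.sum_sub_distrib]
    rw [hZ, hT]
    exact Finset.sum_le_sum fun i _ => Finset.sum_le_sum fun j _ => hpt i j
  -- F1 : T = -S1 - 2*S2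
  have hF1 : T = -S1 - 2 * S2 := by
    rw [hT, hS1, hS2]
    rw [← Finset.sum_neg_distrib, Finset.mul_sum, ← Finset.sum_sub_distrib]
    refine Finset.sum_congr rfl fun i _ => ?_
    rw [← Finset.sum_neg_distrib, Finset.mul_sum, ← Finset.sum_sub_distrib]
    refine Finset.sum_congr rfl fun j _ => ?_
    simp only [hδ]
    ring
  -- F2 : S2 = -2 m SD
  have hP : ∑ i, ∑ j, A i j * (x t i - x t j) * δ i = -(m * SD) := by
    have : ∀ i, ∑ j, A i j * (x t i - x t j) * δ i = -(m * δ i ^ 2) := by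
      intro i
      have h1 : ∑ j, A i j * (x t i - x t j) * δ i
          = (∑ j, A i j * (x t j - x t i)) * (-δ i) := by
        rw [Finset.sum_mul]
        refine Finset.sum_congr rfl fun j _ => ?_
        ring
      rw [h1, hK1 i]
      ring
    rw [Finset.sum_congr rfl fun i _ => this i, hSD, Finset.mul_sum,
      ← Finset.sum_neg_distrib]
  have hQ : ∑ i, ∑ j, A i j * (x t i - x t j) * δ j
      = -(∑ i, ∑ j, A i j * (x t i - x t j) * δ i) := by
    rw [Finset.sum_comm]
    rw [← Finset.sum_neg_distrib]
    refine Finset.sum_congr rfl fun a _ => ?_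
    rw [← Finset.sum_neg_distrib]
    refine Finset.sum_congr rfl fun b _ => ?_
    rw [hAsymm b a]
    ring
  have hF2 : S2 = -(2 * m * SD) := by
    have hsplit : S2 = (∑ i, ∑ j, A i j * (x t i - x t j) * δ i)
        - (∑ i, ∑ j, A i j * (x t i - x t j) * δ j) := by
      rw [hS2, ← Finset.sum_sub_distrib]
      refine Finset.sum_congr rfl fun i _ => ?_
      rw [← Finset.sum_sub_distrib]
      refine Finset.sum_congr rfl fun j _ => ?_
      ring
    rw [hsplit, hQ, hP]
    ring
  -- F3 : S1 ≤ 4 Sd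
  have hF3 : S1 ≤ 4 * Sd := by
    have hb : S1 ≤ ∑ i, ∑ j, A i j * (2 * δ i ^2 + 2 * δ j ^2) := by
      rw [hS1]
      refine Finset.sum_le_sum fun i _ => Finset.sum_le_sum fun j _ => ?_
      have : (δ i - δ j)^2 ≤ 2 * δ i ^2 + 2 * δ j ^2 := by nlinarith [sq_nonneg (δ i + δ j)]
      exact mul_le_mul_of_nonneg_left this (hAnn i j)
    have hswap : ∑ i, ∑ j, A i j * δ j ^ 2 = Sd := by
      rw [Finset.sum_comm]
      rw [hSd]
      refine Finset.sum_congr rfl fun a _ => ?_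
      rw [Finset.sum_mul]
      refine Finset.sum_congr rfl fun b _ => ?_
      rw [hAsymm b a]
    have hself : ∑ i, ∑ j, A i j * δ i ^ 2 = Sd := by
      rw [hSd]
      refine Finset.sum_congr rfl fun i _ => ?_
      rw [Finset.sum_mul]
    have heq : ∑ i, ∑ j, A i j * (2 * δ i ^2 + 2 * δ j ^2)
        = 2 * (∑ i, ∑ j, A i j * δ i ^ 2) + 2 * (∑ i, ∑ j, A i j * δ j ^ 2) := by
      rw [Finset.mul_sum, Finset.mul_sum, ← Finset.sum_add_distrib]
      refine Finset.sum_congr rfl fun i _ => ?_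
      rw [Finset.mul_sum, Finset.mul_sum, ← Finset.sum_add_distrib]
      refine Finset.sum_congr rfl fun j _ => ?_
      ring
    rw [heq, hswap, hself] at hb
    linarith
  -- rewrite RHS of goal
  have hRHS : ∑ i, (m - ((Nb G x ε t i).card : ℝ)) * (x t i - x (t+1) i) ^ 2
      = m * SD - Sd := by
    rw [hSD, hSd, Finset.mul_sum, ← Finset.sum_sub_distrib]
    refine Finset.sum_congr rfl fun i _ => ?_
    rw [hd i]
    simp only [hδ]
    ring
  rw [ge_iff_le, hRHS]
  linarith
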